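/- Let a ≥ 1, let x ≥ 0, let n⃗ = (n_0,…,n_x) be positive integers, let T⃗_x be a system of trees which is (2^{a−1}n_0,…,2^{a−1}n_x)-good from a tuple of strings α⃗_x, and let P_1,…,P_a be sets of (x+1)-tuples of strings such that every element of T⃗_x belongs to P_1 ∪ … ∪ P_a. Then for some i with 1 ≤ i ≤ a, there is a system of trees, each of whose elements is an element of T⃗_x, which is n⃗-good from α⃗_x for P_i. -/

import Mathlib

/-- A *tree*: a finite set of pairwise incomparable strings (antichain under
the prefix/extension order), where a string is a finite sequence of naturals. -/
def IsTree (T : Finset (List ℕ)) : Prop :=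
  ∀ σ ∈ T, ∀ τ ∈ T, σ <+: τ → σ = τ

/-- `T` is `a`-good from `σ`: `T` is nonempty, every string in `T` extends `σ`,
and for every `τ` with `σ ⊆ τ ⊊ ρ` for some `ρ ∈ T`, at least `a` immediate
successors `τ*k` of `τ` are initial segments of elements of `T`. -/
def GoodFrom (a : ℕ) (T : Finset (List ℕ)) (σ : List ℕ) : Prop :=
  T.Nonempty ∧ (∀ ρ ∈ T, σ <+: ρ) ∧
    ∀ τ : List ℕ, (∃ ρ ∈ T, σ <+: τ ∧ τ <+: ρ ∧ τ ≠ ρ) →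
      a ≤ {k : ℕ | ∃ ρ ∈ T, τ ++ [k] <+: ρ}.ncard

/-- `T` is `a`-good from `σ` for `P`: in addition `T ⊆ P`. -/
def GoodFromFor (a : ℕ) (T : Finset (List ℕ)) (σ : List ℕ) (P : Set (List ℕ)) : Prop :=
  GoodFrom a T σ ∧ ↑T ⊆ P

/-- A *system of trees* `T⃗ = (T_0, …, T_x)`: a tree `T_0` together with,
recursively, for each tuple `(σ_0, …, σ_{k-1})`, a tree `T_k(σ_0, …, σ_{k-1})`;
formally, the tree at level `k` is a function of the strings at the levels `< k`. -/
def TreeSystem (x : ℕ) : Type :=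
  (k : Fin (x + 1)) → ((j : Fin (k : ℕ)) → List ℕ) → Finset (List ℕ)

/-- Restriction of a tuple of strings to the coordinates below `k`. -/
def restrictBelow {x : ℕ} (k : Fin (x + 1)) (β : Fin (x + 1) → List ℕ) :
    (j : Fin (k : ℕ)) → List ℕ :=
  fun j => β ⟨j, j.isLt.trans k.isLt⟩

/-- Every level of the system is a tree (finite antichain). -/
def IsTreeSystem {x : ℕ} (T : TreeSystem x) : Prop :=
  ∀ k ρ, IsTree (T k ρ)

/-- `β` is an element of the subsystem `(T_0, …, T_{K-1})`:
`β k ∈ T_k(β_0, …, β_{k-1})` for all `k < K`. -/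
def SysMemUpTo {x : ℕ} (T : TreeSystem x) (K : Fin (x + 1))
    (β : Fin (x + 1) → List ℕ) : Prop :=
  ∀ k, k < K → β k ∈ T k (restrictBelow k β)

/-- `β` is an element of the system `T⃗`: `β k ∈ T_k(β_0, …, β_{k-1})` for all `k`. -/
def SysElem {x : ℕ} (T : TreeSystem x) (β : Fin (x + 1) → List ℕ) : Prop :=
  ∀ k, β k ∈ T k (restrictBelow k β)

/-- The subsystem `(T_0, …, T_{K-1})` is `(n_0, …, n_{K-1})`-good from `σ⃗`. -/
def SysGoodBelow {x : ℕ} (n : Fin (x + 1) → ℕ) (T : TreeSystem x)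
    (σ : Fin (x + 1) → List ℕ) (K : Fin (x + 1)) : Prop :=
  ∀ k, k < K → ∀ β, SysMemUpTo T k β →
    GoodFrom (n k) (T k (restrictBelow k β)) (σ k)

/-- The system `T⃗` is `n⃗`-good from `σ⃗`: for each `k` and each element
`β⃗_{k-1}` of the subsystem `(T_0, …, T_{k-1})`, the tree `T_k(β⃗_{k-1})`
is `n_k`-good from `σ_k`. -/
def SysGoodFrom {x : ℕ} (n : Fin (x + 1) → ℕ) (T : TreeSystem x)
    (σ : Fin (x + 1) → List ℕ) : Prop :=
  ∀ k β, SysMemUpTo T k β → GoodFrom (n k) (T k (restrictBelow k β)) (σ k)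

/-- The system `T⃗` is `n⃗`-good from `σ⃗` for `P`: in addition every element
of the system belongs to `P`. -/
def SysGoodFromFor {x : ℕ} (n : Fin (x + 1) → ℕ) (T : TreeSystem x)
    (σ : Fin (x + 1) → List ℕ) (P : Set (Fin (x + 1) → List ℕ)) : Prop :=
  SysGoodFrom n T σ ∧ ∀ β, SysElem T β → β ∈ P

/-- `ξ⃗` componentwise extends `β⃗`. -/
def TupleExtends {x : ℕ} (β ξ : Fin (x + 1) → List ℕ) : Prop :=
  ∀ k, β k <+: ξ k

/-- A set of tuples of strings is *open* if it is closed under componentwise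
extension. -/
def IsOpenTupleSet {x : ℕ} (P : Set (Fin (x + 1) → List ℕ)) : Prop :=
  ∀ β ∈ P, ∀ ξ, TupleExtends β ξ → ξ ∈ P

lemma succ_eq_of_prefix {σ ρ : List ℕ} {k k' : ℕ} (h : σ ++ [k] <+: ρ)
    (h' : σ ++ [k'] <+: ρ) : k = k' := by
  rcases List.prefix_or_prefix_of_prefix h h' with hh | hh <;>
  · have := hh.eq_of_length (by simp)
    simp only [List.append_cancel_left_eq, List.cons.injEq] at this
    omega

lemma succSet_finite (S : Finset (List ℕ)) (τ : List ℕ) :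
    {k : ℕ | ∃ ρ ∈ S, τ ++ [k] <+: ρ}.Finite := by
  have hsub : {k : ℕ | ∃ ρ ∈ S, τ ++ [k] <+: ρ} ⊆
      ⋃ ρ ∈ (S : Set (List ℕ)), {k | τ ++ [k] <+: ρ} := by
    rintro k ⟨ρ, hρ, hp⟩
    exact Set.mem_biUnion hρ hp
  refine (Set.Finite.biUnion S.finite_toSet fun ρ _ => ?_).subset hsub
  exact Set.Subsingleton.finite fun k hk k' hk' => succ_eq_of_prefix hk hk'

lemma GoodFrom.mono {m m' : ℕ} {T : Finset (List ℕ)} {σ : List ℕ}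
    (h : GoodFrom m' T σ) (hle : m ≤ m') : GoodFrom m T σ :=
  ⟨h.1, h.2.1, fun τ hτ => le_trans hle (h.2.2 τ hτ)⟩

lemma tree_lemma (a n : ℕ) (ha : 1 ≤ a) (hn : 1 ≤ n) (Q : Fin a → Set (List ℕ)) :
    ∀ (μ : ℕ) (T : Finset (List ℕ)) (σ : List ℕ),
      (∑ ρ ∈ T, (ρ.length - σ.length)) ≤ μ → IsTree T → GoodFrom (a * n) T σ →
      (∀ ρ ∈ T, ∃ i, ρ ∈ Q i) →
      ∃ i S, S ⊆ T ∧ GoodFrom n S σ ∧ ∀ ρ ∈ S, ρ ∈ Q i := by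
  intro μ
  induction μ using Nat.strong_induction_on with
  | _ μ ih =>
  intro T σ hμ hT hg hc
  by_cases hσT : σ ∈ T
  · obtain ⟨i, hi⟩ := hc σ hσT
    refine ⟨i, {σ}, by simpa using hσT, ⟨⟨σ, by simp⟩, ?_, ?_⟩, ?_⟩
    · intro ρ hρ
      rw [Finset.mem_singleton] at hρ
      rw [hρ]
    · rintro τ ⟨ρ, hρ, h1, h2, h3⟩
      rw [Finset.mem_singleton] at hρ
      subst hρ
      exact absurd (h2.eq_of_length (le_antisymm h2.length_le h1.length_le)) h3
    · intro ρ hρ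
      rw [Finset.mem_singleton] at hρ
      rw [hρ]; exact hi
  · obtain ⟨ρ₀, hρ₀⟩ := hg.1
    have hne : σ ≠ ρ₀ := fun h => hσT (h ▸ hρ₀)
    have hK : a * n ≤ {k : ℕ | ∃ ρ ∈ T, σ ++ [k] <+: ρ}.ncard :=
      hg.2.2 σ ⟨ρ₀, hρ₀, List.prefix_refl σ, hg.2.1 ρ₀ hρ₀, hne⟩
    have hKfin := succSet_finite T σ
    set KF := hKfin.toFinset with hKFdef
    have hKcard : a * n ≤ KF.card := by
      rwa [Set.ncard_eq_toFinset_card _ hKfin] at hK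
    have hKmem : ∀ k ∈ KF, ∃ ρ ∈ T, σ ++ [k] <+: ρ := by
      intro k hk
      rw [hKFdef, Set.Finite.mem_toFinset] at hk
      exact hk
    have Hrec : ∀ k ∈ KF, ∃ i S, S ⊆ T.filter (fun ρ => σ ++ [k] <+: ρ) ∧
        GoodFrom n S (σ ++ [k]) ∧ ∀ ρ ∈ S, ρ ∈ Q i := by
      intro k hk
      obtain ⟨ρw, hρwT, hρwp⟩ := hKmem k hk
      set Tk := T.filter (fun ρ => σ ++ [k] <+: ρ) with hTkdef
      have hTkmem : ∀ ρ, ρ ∈ Tk ↔ ρ ∈ T ∧ σ ++ [k] <+: ρ := by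
        intro ρ; simp [hTkdef]
      have hρwTk : ρw ∈ Tk := (hTkmem ρw).2 ⟨hρwT, hρwp⟩
      have hTklen : ∀ ρ ∈ Tk, σ.length + 1 ≤ ρ.length := by
        intro ρ hρ
        have := ((hTkmem ρ).1 hρ).2.length_le
        simpa using this
      have hmeas : (∑ ρ ∈ Tk, (ρ.length - (σ ++ [k]).length)) < μ := by
        have h1 : ∑ ρ ∈ Tk, ((ρ.length - (σ ++ [k]).length) + 1)
            ≤ ∑ ρ ∈ Tk, (ρ.length - σ.length) :=
          Finset.sum_le_sum (fun ρ hρ => by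
            have := hTklen ρ hρ; simp only [List.length_append, List.length_cons,
              List.length_nil]; omega)
        rw [Finset.sum_add_distrib, Finset.sum_const, smul_eq_mul, mul_one] at h1
        have h2 : ∑ ρ ∈ Tk, (ρ.length - σ.length) ≤ ∑ ρ ∈ T, (ρ.length - σ.length) :=
          Finset.sum_le_sum_of_subset (by rw [hTkdef]; exact Finset.filter_subset _ _)
        have h3 : 0 < Tk.card := Finset.card_pos.2 ⟨ρw, hρwTk⟩
        omega
      refine ih _ hmeas Tk (σ ++ [k]) le_rfl ?_ ?_ ?_
      · intro ρ1 h1 ρ2 h2 hp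
        exact hT ρ1 ((hTkmem ρ1).1 h1).1 ρ2 ((hTkmem ρ2).1 h2).1 hp
      · refine ⟨⟨ρw, hρwTk⟩, fun ρ hρ => ((hTkmem ρ).1 hρ).2, ?_⟩
        rintro τ ⟨ρ, hρ, h1, h2, h3⟩
        have hbase := hg.2.2 τ ⟨ρ, ((hTkmem ρ).1 hρ).1,
          (List.prefix_append σ [k]).trans h1, h2, h3⟩
        have hseteq : {j : ℕ | ∃ ρ' ∈ T, τ ++ [j] <+: ρ'}
            = {j : ℕ | ∃ ρ' ∈ Tk, τ ++ [j] <+: ρ'} := by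
          ext j
          simp only [Set.mem_setOf_eq]
          constructor
          · rintro ⟨ρ', hρ', hp⟩
            exact ⟨ρ', (hTkmem ρ').2 ⟨hρ', h1.trans ((List.prefix_append τ [j]).trans hp)⟩, hp⟩
          · rintro ⟨ρ', hρ', hp⟩
            exact ⟨ρ', ((hTkmem ρ').1 hρ').1, hp⟩
        rwa [hseteq] at hbase
      · intro ρ hρ
        exact hc ρ ((hTkmem ρ).1 hρ).1
    haveI : Nonempty (Fin a) := ⟨⟨0, ha⟩⟩
    choose! idx SF hSF using Hrec
    have hfib : KF.card = ∑ i : Fin a, (KF.filter (fun k => idx k = i)).card :=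
      Finset.card_eq_sum_card_fiberwise (fun k _ => Finset.mem_univ (idx k))
    obtain ⟨i₀, hi₀⟩ : ∃ i : Fin a, n ≤ (KF.filter (fun k => idx k = i)).card := by
      by_contra hcon
      push_neg at hcon
      have hsum : ∑ i : Fin a, (KF.filter (fun k => idx k = i)).card
          ≤ ∑ _i : Fin a, (n - 1) :=
        Finset.sum_le_sum (fun i _ => by have := hcon i; omega)
      rw [Finset.sum_const, Finset.card_univ, Fintype.card_fin, smul_eq_mul] at hsum
      have hmul : a * (n - 1) + a = a * n := by
        rw [← Nat.mul_succ]; congr 1; omega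
      omega
    obtain ⟨KF', hKF'sub, hKF'card⟩ := Finset.exists_subset_card_eq hi₀
    have hKF'mem : ∀ k ∈ KF', k ∈ KF ∧ idx k = i₀ := by
      intro k hk
      have := hKF'sub hk
      rw [Finset.mem_filter] at this
      exact this
    have hprops : ∀ k ∈ KF', (SF k ⊆ T.filter (fun ρ => σ ++ [k] <+: ρ)) ∧
        GoodFrom n (SF k) (σ ++ [k]) ∧ ∀ ρ ∈ SF k, ρ ∈ Q (idx k) := by
      intro k hk
      exact hSF k (hKF'mem k hk).1
    have hSFT : ∀ k ∈ KF', ∀ ρ ∈ SF k, ρ ∈ T ∧ σ ++ [k] <+: ρ := by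
      intro k hk ρ hρ
      have := (hprops k hk).1 hρ
      rw [Finset.mem_filter] at this
      exact this
    refine ⟨i₀, KF'.biUnion SF, ?_, ⟨?_, ?_, ?_⟩, ?_⟩
    · intro ρ hρ
      obtain ⟨k, hk, hρk⟩ := Finset.mem_biUnion.1 hρ
      exact (hSFT k hk ρ hρk).1
    · obtain ⟨k, hk⟩ : KF'.Nonempty := Finset.card_pos.1 (by omega)
      obtain ⟨ρ, hρ⟩ := (hprops k hk).2.1.1
      exact ⟨ρ, Finset.mem_biUnion.2 ⟨k, hk, hρ⟩⟩
    · intro ρ hρ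
      obtain ⟨k, hk, hρk⟩ := Finset.mem_biUnion.1 hρ
      exact (List.prefix_append σ [k]).trans (hSFT k hk ρ hρk).2
    · rintro τ ⟨ρ, hρS, hστ, hτρ, hτρne⟩
      by_cases hτσ : τ = σ
      · subst hτσ
        have hsub : (KF' : Set ℕ) ⊆ {j : ℕ | ∃ ρ' ∈ KF'.biUnion SF, τ ++ [j] <+: ρ'} := by
          intro k hk
          rw [Finset.mem_coe] at hk
          obtain ⟨ρ', hρ'⟩ := (hprops k hk).2.1.1
          exact ⟨ρ', Finset.mem_biUnion.2 ⟨k, hk, hρ'⟩, (hprops k hk).2.1.2.1 ρ' hρ'⟩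
        calc n = KF'.card := hKF'card.symm
        _ = (KF' : Set ℕ).ncard := (Set.ncard_coe_finset _).symm
        _ ≤ _ := Set.ncard_le_ncard hsub (succSet_finite _ _)
      · obtain ⟨t, rfl⟩ := hστ
        have ht : t ≠ [] := by rintro rfl; simp at hτσ
        obtain ⟨k₁, t', rfl⟩ : ∃ k₁ t', t = k₁ :: t' := by
          cases t with
          | nil => exact absurd rfl ht
          | cons h t => exact ⟨h, t, rfl⟩
        have hp1 : σ ++ [k₁] <+: σ ++ k₁ :: t' := ⟨t', by simp⟩
        obtain ⟨k₂, hk₂, hρk₂⟩ := Finset.mem_biUnion.1 hρS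
        have hk₁₂ : k₂ = k₁ :=
          succ_eq_of_prefix (hSFT k₂ hk₂ ρ hρk₂).2 (hp1.trans hτρ)
        subst hk₁₂
        have hseteq : {j : ℕ | ∃ ρ' ∈ KF'.biUnion SF, (σ ++ k₂ :: t') ++ [j] <+: ρ'}
            = {j : ℕ | ∃ ρ' ∈ SF k₂, (σ ++ k₂ :: t') ++ [j] <+: ρ'} := by
          ext j
          simp only [Set.mem_setOf_eq]
          constructor
          · rintro ⟨ρ', hρ', hp⟩
            obtain ⟨k₃, hk₃, hρ'k₃⟩ := Finset.mem_biUnion.1 hρ'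
            have hk₃₂ : k₃ = k₂ := succ_eq_of_prefix (hSFT k₃ hk₃ ρ' hρ'k₃).2
              ((hp1.trans (List.prefix_append _ [j])).trans hp)
            subst hk₃₂
            exact ⟨ρ', hρ'k₃, hp⟩
          · rintro ⟨ρ', hρ', hp⟩
            exact ⟨ρ', Finset.mem_biUnion.2 ⟨k₂, hk₂, hρ'⟩, hp⟩
        rw [hseteq]
        exact (hprops k₂ hk₂).2.1.2.2 (σ ++ k₂ :: t') ⟨ρ, hρk₂, hp1, hτρ, hτρne⟩
    · intro ρ hρ
      obtain ⟨k, hk, hρk⟩ := Finset.mem_biUnion.1 hρ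
      have := (hprops k hk).2.2 ρ hρk
      rwa [(hKF'mem k hk).2] at this

lemma main_aux (a x : ℕ) (ha : 1 ≤ a) (n : Fin (x + 1) → ℕ) (hn : ∀ i, 1 ≤ n i)
    (T : TreeSystem x) (hT : IsTreeSystem T) (α : Fin (x + 1) → List ℕ)
    (hgood : SysGoodFrom (fun i => 2 ^ (a - 1) * n i) T α)
    (P : Fin a → Set (Fin (x + 1) → List ℕ))
    (hcov : ∀ β, SysElem T β → β ∈ ⋃ i, P i) :
    ∀ (d k : ℕ), k + d = x + 1 → ∀ β : Fin (x + 1) → List ℕ,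
      (∀ j : Fin (x + 1), (j : ℕ) < k → β j ∈ T j (restrictBelow j β)) →
      ∃ (i : Fin a) (S : TreeSystem x),
        IsTreeSystem S ∧
        (∀ (j : Fin (x + 1)) ρ, (j : ℕ) < k → S j ρ = {β j}) ∧
        (∀ β', SysElem S β' → SysElem T β') ∧
        (∀ (j : Fin (x + 1)) β', k ≤ (j : ℕ) → SysMemUpTo S j β' →
          GoodFrom (n j) (S j (restrictBelow j β')) (α j)) ∧
        (∀ β', SysElem S β' → β' ∈ P i) := by
  intro d
  induction d with
  | zero =>
    intro k hk β hβ
    have hkx : k = x + 1 := by omega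
    subst hkx
    have hel : SysElem T β := fun j => hβ j j.isLt
    have hmem := hcov β hel
    rw [Set.mem_iUnion] at hmem
    obtain ⟨i, hi⟩ := hmem
    refine ⟨i, fun j _ => {β j}, ?_, ?_, ?_, ?_, ?_⟩
    · intro j ρ σ' hσ' τ' hτ' _
      rw [Finset.mem_singleton] at hσ' hτ'
      rw [hσ', hτ']
    · intro j ρ _; rfl
    · intro β' hβ'
      have hbb : β' = β := funext fun j => by
        have := hβ' j
        rwa [Finset.mem_singleton] at this
      rw [hbb]; exact hel
    · intro j β' hj _
      exact absurd j.isLt (by omega)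
    · intro β' hβ'
      have hbb : β' = β := funext fun j => by
        have := hβ' j
        rwa [Finset.mem_singleton] at this
      rw [hbb]; exact hi
  | succ d ih =>
    intro k hk β hβ
    have hkx : k < x + 1 := by omega
    have hmem : SysMemUpTo T ⟨k, hkx⟩ β := fun j hj => hβ j hj
    have hTk := hgood ⟨k, hkx⟩ β hmem
    set Kf : Fin (x + 1) := ⟨k, hkx⟩ with hKf
    set Tk := T Kf (restrictBelow Kf β) with hTkdef
    have hupd : ∀ (σ : List ℕ) (j : Fin (x + 1)), (j : ℕ) ≤ k →
        restrictBelow j (Function.update β Kf σ) = restrictBelow j β := by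
      intro σ j hj
      funext j'
      show Function.update β Kf σ ⟨(j' : ℕ), _⟩ = β ⟨(j' : ℕ), _⟩
      rw [Function.update_of_ne]
      intro hcontra
      have := congrArg Fin.val hcontra
      simp only [hKf] at this
      have := j'.isLt
      omega
    have Hrec : ∀ σ ∈ Tk, ∃ (i : Fin a) (S : TreeSystem x),
        IsTreeSystem S ∧
        (∀ (j : Fin (x + 1)) ρ, (j : ℕ) < k + 1 → S j ρ = {Function.update β Kf σ j}) ∧
        (∀ β', SysElem S β' → SysElem T β') ∧
        (∀ (j : Fin (x + 1)) β', k + 1 ≤ (j : ℕ) → SysMemUpTo S j β' →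
          GoodFrom (n j) (S j (restrictBelow j β')) (α j)) ∧
        (∀ β', SysElem S β' → β' ∈ P i) := by
      intro σ hσ
      apply ih (k + 1) (by omega)
      intro j hj
      by_cases hjk : (j : ℕ) = k
      · have hjKf : j = Kf := Fin.ext (by rw [hKf]; exact hjk)
        subst hjKf
        rw [Function.update_self, hupd σ Kf le_rfl]
        exact hσ
      · have hjlt : (j : ℕ) < k := by omega
        rw [Function.update_of_ne (by
            intro hcontra
            have := congrArg Fin.val hcontra
            simp only [hKf] at this
            omega), hupd σ j (le_of_lt hjlt)]
        exact hβ j hjlt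
    haveI : Nonempty (Fin a) := ⟨⟨0, ha⟩⟩
    haveI : Nonempty (TreeSystem x) := ⟨fun _ _ => ∅⟩
    choose! idx SS hSS using Hrec
    have hcover : ∀ σ ∈ Tk, ∃ i, σ ∈ {σ' : List ℕ | idx σ' = i} := fun σ _ => ⟨idx σ, rfl⟩
    have h2a : a ≤ 2 ^ (a - 1) := by
      have := Nat.lt_two_pow_self (n := a - 1)
      omega
    have hgoodk : GoodFrom (a * n Kf) Tk (α Kf) :=
      hTk.mono (Nat.mul_le_mul_right _ h2a)
    obtain ⟨i₀, Sk, hSkT, hSkgood, hSkcol⟩ := tree_lemma a (n Kf) ha (hn Kf)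
      (fun i => {σ' : List ℕ | idx σ' = i}) _ Tk (α Kf) le_rfl (hT Kf _) hgoodk hcover
    classical
    set S : TreeSystem x := fun j =>
      if h1 : (j : ℕ) < k then fun _ => ({β j} : Finset (List ℕ))
      else if h2 : (j : ℕ) = k then fun _ => Sk
      else fun ρ =>
        if ρ ⟨k, by omega⟩ ∈ Tk then SS (ρ ⟨k, by omega⟩) j ρ else ∅
      with hSdef
    have hSlow : ∀ (j : Fin (x + 1)), (j : ℕ) < k → S j = fun _ => ({β j} : Finset (List ℕ)) := by
      intro j hj
      simp only [hSdef]
      rw [dif_pos hj]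
    have hSkEq' : ∀ (j : Fin (x + 1)), (j : ℕ) = k → ∀ ρ, S j ρ = Sk := by
      intro j hj ρ
      simp only [hSdef]
      rw [dif_neg (by omega), dif_pos hj]
    have hShigh : ∀ (j : Fin (x + 1)) (hj : k < (j : ℕ)) (ρ : Fin (j : ℕ) → List ℕ),
        ρ ⟨k, hj⟩ ∈ Tk → S j ρ = SS (ρ ⟨k, hj⟩) j ρ := by
      intro j hj ρ hρ
      simp only [hSdef]
      rw [dif_neg (by omega), dif_neg (by omega)]
      exact if_pos hρ
    have hmemlow : ∀ (β' : Fin (x + 1) → List ℕ) (j' : Fin (x + 1)), (j' : ℕ) < k →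
        β' j' ∈ S j' (restrictBelow j' β') → β' j' = β j' := by
      intro β' j' hj' h
      rw [hSlow j' hj'] at h
      rwa [Finset.mem_singleton] at h
    have hkey : ∀ (β' : Fin (x + 1) → List ℕ) (m : ℕ), k < m →
        (∀ j' : Fin (x + 1), (j' : ℕ) < m → β' j' ∈ S j' (restrictBelow j' β')) →
        β' Kf ∈ Sk ∧
        (∀ j' : Fin (x + 1), (j' : ℕ) < m → β' j' ∈ SS (β' Kf) j' (restrictBelow j' β')) := by
      intro β' m hm hb
      have hKfS : β' Kf ∈ Sk := by
        have := hb Kf hm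
        rwa [hSkEq' Kf rfl] at this
      have hKfTk : β' Kf ∈ Tk := hSkT hKfS
      have hlow : ∀ j' : Fin (x + 1), (j' : ℕ) < k → β' j' = β j' := fun j' hj' =>
        hmemlow β' j' hj' (hb j' (by omega))
      refine ⟨hKfS, ?_⟩
      intro j' hj'
      rcases lt_trichotomy (j' : ℕ) k with hlt | heq | hgt
      · rw [(hSS (β' Kf) hKfTk).2.1 j' _ (by omega), Finset.mem_singleton,
          Function.update_of_ne (by
            intro hcontra
            have hvk : (j' : ℕ) = k := congrArg Fin.val hcontra
            omega)]
        exact hlow j' hlt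
      · have hj'Kf : j' = Kf := Fin.ext heq
        rw [(hSS (β' Kf) hKfTk).2.1 j' _ (by omega), hj'Kf, Function.update_self,
          Finset.mem_singleton]
      · have heq2 : restrictBelow j' β' ⟨k, hgt⟩ = β' Kf := rfl
        have hth := hb j' hj'
        rw [hShigh j' hgt _ (by rw [heq2]; exact hKfTk)] at hth
        rwa [heq2] at hth
    refine ⟨i₀, S, ?_, ?_, ?_, ?_, ?_⟩
    · intro j ρ
      rcases lt_trichotomy (j : ℕ) k with hlt | heq | hgt
      · rw [hSlow j hlt]
        intro s hs t ht _
        rw [Finset.mem_singleton] at hs ht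
        rw [hs, ht]
      · rw [hSkEq' j heq ρ]
        intro s hs t ht hp
        exact hT Kf (restrictBelow Kf β) s (hSkT hs) t (hSkT ht) hp
      · by_cases hmem2 : ρ ⟨k, hgt⟩ ∈ Tk
        · rw [hShigh j hgt ρ hmem2]
          exact (hSS _ hmem2).1 j ρ
        · have hSe : S j ρ = ∅ := by
            simp only [hSdef]
            rw [dif_neg (by omega), dif_neg (by omega)]
            exact if_neg hmem2
          rw [hSe]
          intro s hs
          exact absurd hs (Finset.notMem_empty s)
    · intro j ρ hj
      rw [hSlow j hj]
    · intro β' hβ'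
      obtain ⟨hKfS, hall⟩ := hkey β' (x + 1) (by omega) (fun j' _ => hβ' j')
      exact (hSS (β' Kf) (hSkT hKfS)).2.2.1 β' (fun j' => hall j' j'.isLt)
    · intro j β' hj hmem'
      rcases eq_or_lt_of_le hj with heq | hlt
      · rw [hSkEq' j heq.symm _]
        have hjKf : j = Kf := Fin.ext heq.symm
        rw [hjKf]
        exact hSkgood
      · obtain ⟨hKfS, hall⟩ := hkey β' (j : ℕ) hlt (fun j' hj' => hmem' j' hj')
        have hTkm : β' Kf ∈ Tk := hSkT hKfS
        have hgd := (hSS (β' Kf) hTkm).2.2.2.1 j β' (by omega) (fun j' hj' => hall j' hj')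
        have heq2 : restrictBelow j β' ⟨k, hlt⟩ = β' Kf := rfl
        rw [hShigh j hlt _ (by rw [heq2]; exact hTkm), heq2]
        exact hgd
    · intro β' hβ'
      obtain ⟨hKfS, hall⟩ := hkey β' (x + 1) (by omega) (fun j' _ => hβ' j')
      have hPi := (hSS (β' Kf) (hSkT hKfS)).2.2.2.2 β' (fun j' => hall j' j'.isLt)
      have hidx : idx (β' Kf) = i₀ := hSkcol (β' Kf) hKfS
      rwa [hidx] at hPi

/-- If the system `T⃗` is `(2^{a−1}n_0, …, 2^{a−1}n_x)`-good from `α⃗` and every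
element of `T⃗` belongs to `P_1 ∪ ⋯ ∪ P_a`, then for some `i` there is a system,
all of whose elements are elements of `T⃗`, which is `n⃗`-good from `α⃗` for `P_i`. -/
theorem sys_good_subset_of_cover (a x : ℕ) (ha : 1 ≤ a)
    (n : Fin (x + 1) → ℕ) (hn : ∀ i, 1 ≤ n i)
    (T : TreeSystem x) (hT : IsTreeSystem T) (α : Fin (x + 1) → List ℕ)
    (hgood : SysGoodFrom (fun i => 2 ^ (a - 1) * n i) T α)
    (P : Fin a → Set (Fin (x + 1) → List ℕ))
    (hcov : ∀ β, SysElem T β → β ∈ ⋃ i, P i) :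
    ∃ i : Fin a, ∃ S : TreeSystem x, IsTreeSystem S ∧
      (∀ β, SysElem S β → SysElem T β) ∧ SysGoodFromFor n S α (P i) := by
  obtain ⟨i, S, h0, h1, h2, h3, h4⟩ := main_aux a x ha n hn T hT α hgood P hcov
    (x + 1) 0 (by omega) (fun _ => []) (fun j hj => absurd hj (by omega))
  exact ⟨i, S, h0, h2, ⟨fun K β hm => h3 K β (Nat.zero_le _) hm, h4⟩⟩
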